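/- arXiv:1412.2976 — 9 statements merged into one kernel-verified Lean document; each statement's English description precedes it below -/
import Mathlib

section
/- Let R be a *-semigroup and a₁, a₂, d ∈ S such that a₁ and a₂ have Moore-Penrose inverses a₁† and a₂†. If d·a₁ = a₂·d and d·a₁* = a₂*·d, then a₂†·d = d·a₁†. -/
/-- `b` is a Moore-Penrose inverse of `a` in a *-semigroup. -/
def IsMPsemigroup {S : Type*} [Semigroup S] [StarMul S] (a b : S) : Prop :=
  a * b * a = a ∧ b * a * b = b ∧ star (a * b) = a * b ∧ star (b * a) = b * a

theorem stmt0 {S : Type*} [Semigroup S] [StarMul S]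
    (a₁ a₂ d b₁ b₂ : S)
    (h₁ : IsMPsemigroup a₁ b₁) (h₂ : IsMPsemigroup a₂ b₂)
    (hd : d * a₁ = a₂ * d) (hd' : d * star a₁ = star a₂ * d) :
    b₂ * d = d * b₁ := by
  obtain ⟨p₁, q₁, r₁, s₁⟩ := h₁
  obtain ⟨p₂, q₂, r₂, s₂⟩ := h₂
  have e1 : star a₁ = star a₁ * (a₁ * b₁) := by
    conv_lhs => rw [← p₁]
    rw [star_mul, r₁]
  have p₂' : a₂ * (b₂ * a₂) = a₂ := by rw [← mul_assoc]; exact p₂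
  have e2 : b₂ * (a₂ * star a₂) = star a₂ := by
    conv_rhs => rw [← p₂']
    rw [star_mul, s₂, mul_assoc]
  have e3 : b₂ = b₂ * (star b₂ * star a₂) := by
    conv_lhs => rw [← q₂]
    rw [mul_assoc, ← star_mul, r₂]
  have e4 : b₁ * a₁ = star a₁ * star b₁ := by rw [← s₁, star_mul]
  have chainA : b₂ * d = b₂ * (a₂ * (d * b₁)) := by
    calc b₂ * d = b₂ * (star b₂ * (star a₂ * d)) := by
          conv_lhs => rw [e3]
          simp only [mul_assoc]
    _ = b₂ * (star b₂ * (d * star a₁)) := by rw [← hd']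
    _ = b₂ * (star b₂ * (d * (star a₁ * (a₁ * b₁)))) := by rw [← e1]
    _ = b₂ * (star b₂ * ((d * star a₁) * (a₁ * b₁))) := by rw [mul_assoc d]
    _ = b₂ * (star b₂ * ((star a₂ * d) * (a₁ * b₁))) := by rw [hd']
    _ = b₂ * (star b₂ * (star a₂ * ((d * a₁) * b₁))) := by
          simp only [mul_assoc]
    _ = b₂ * (star b₂ * (star a₂ * ((a₂ * d) * b₁))) := by rw [hd]
    _ = (b₂ * (star b₂ * star a₂)) * (a₂ * (d * b₁)) := by
          simp only [mul_assoc]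
    _ = b₂ * (a₂ * (d * b₁)) := by rw [← e3]
  have db : d * b₁ = (star a₂ * d) * (star b₁ * b₁) := by
    calc d * b₁ = d * ((b₁ * a₁) * b₁) := by rw [q₁]
    _ = d * ((star a₁ * star b₁) * b₁) := by rw [e4]
    _ = (d * star a₁) * (star b₁ * b₁) := by simp only [mul_assoc]
    _ = (star a₂ * d) * (star b₁ * b₁) := by rw [hd']
  have chainB : d * b₁ = b₂ * (a₂ * (d * b₁)) := by
    calc d * b₁ = (star a₂ * d) * (star b₁ * b₁) := db
    _ = ((b₂ * (a₂ * star a₂)) * d) * (star b₁ * b₁) := by rw [e2]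
    _ = b₂ * (a₂ * ((star a₂ * d) * (star b₁ * b₁))) := by simp only [mul_assoc]
    _ = b₂ * (a₂ * (d * b₁)) := by rw [← db]
  rw [chainA]
  exact chainB.symm
end

section
/- Let R be a ring with involution and a, b ∈ R be Moore-Penrose invertible with ab = ba and a*b = ba*. Then ab is Moore-Penrose invertible and (ab)† = b†a† = a†b†. -/
/-- `b` is a Moore-Penrose inverse of `a`. -/
def IsMP {R : Type*} [Ring R] [StarRing R] (a b : R) : Prop :=
  a * b * a = a ∧ b * a * b = b ∧ star (a * b) = a * b ∧ star (b * a) = b * a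

/-- `p` is a projector: `p² = p = p*`. -/
def IsProjector {R : Type*} [Ring R] [StarRing R] (p : R) : Prop :=
  p * p = p ∧ star p = p

/-- `a` is *-cancellable. -/
def StarCancellable {R : Type*} [Ring R] [StarRing R] (a : R) : Prop :=
  (∀ x : R, star a * a * x = 0 → a * x = 0) ∧ (∀ x : R, x * (a * star a) = 0 → x * a = 0)

section Helpers

variable {R : Type*} [Ring R] [StarRing R]

lemma mp_star {a a' : R} (h : IsMP a a') : IsMP (star a) (star a') := by
  obtain ⟨e1, e2, e3, e4⟩ := h
  refine ⟨?_, ?_, ?_, ?_⟩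
  · rw [← star_mul, ← star_mul, ← mul_assoc, e1]
  · rw [← star_mul, ← star_mul, ← mul_assoc, e2]
  · rw [← star_mul, e4]; exact e4
  · rw [← star_mul, e3]; exact e3

lemma lemA {a a' : R} (ha : IsMP a a') : star a * (a * a') = star a := by
  obtain ⟨e1, _, e3, _⟩ := ha
  calc star a * (a * a') = star ((a * a') * a) := by rw [star_mul, e3]
    _ = star a := by rw [e1]

lemma lemK1 {a a' b : R} (ha : IsMP a a') (h2 : star a * b = b * star a) :
    a' * b = a' * b * (a * a') := by
  have hA := lemA ha
  obtain ⟨e1, e2, e3, e4⟩ := ha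
  have hE : a' = a' * star a' * star a := by
    calc a' = a' * (a * a') := by rw [← mul_assoc, e2]
      _ = a' * (star a' * star a) := by rw [← star_mul, e3]
      _ = a' * star a' * star a := by rw [mul_assoc]
  calc a' * b = a' * star a' * star a * b := by rw [← hE]
    _ = a' * star a' * (b * star a) := by rw [mul_assoc, h2]
    _ = a' * star a' * (b * (star a * (a * a'))) := by rw [hA]
    _ = a' * star a' * (b * star a * (a * a')) := by rw [← mul_assoc b]
    _ = a' * star a' * (star a * b * (a * a')) := by rw [h2]
    _ = a' * star a' * star a * (b * (a * a')) := by simp only [mul_assoc]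
    _ = a' * (b * (a * a')) := by rw [← hE]
    _ = a' * b * (a * a') := by rw [mul_assoc]

lemma key_q {a a' b : R} (ha : IsMP a a') (h1 : a * b = b * a)
    (h2 : star a * b = b * star a) : (a * a') * b = b * (a * a') := by
  have K1 := lemK1 ha h2
  obtain ⟨e1, e2, e3, e4⟩ := ha
  have K2 : (a * a') * b = (a * a') * b * (a * a') := by
    calc (a * a') * b = a * (a' * b) := by rw [mul_assoc]
      _ = a * (a' * b * (a * a')) := by rw [← K1]
      _ = (a * a') * b * (a * a') := by simp only [mul_assoc]
  have K3 : (a * a') * b * (a * a') = b * (a * a') := by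
    calc (a * a') * b * (a * a') = a * a' * (b * a) * a' := by simp only [mul_assoc]
      _ = a * a' * (a * b) * a' := by rw [h1]
      _ = a * b * a' := by rw [← mul_assoc (a * a') a b, e1]
      _ = b * (a * a') := by rw [h1, mul_assoc]
  exact K2.trans K3

lemma key_p {a a' b : R} (ha : IsMP a a') (h1 : a * b = b * a)
    (h2 : star a * b = b * star a) : (a' * a) * b = b * (a' * a) := by
  have h2' : star (star a) * b = b * star (star a) := by rw [star_star]; exact h1
  have h := key_q (mp_star ha) h2 h2'
  rwa [← star_mul, ha.2.2.2] at h

lemma key_inv {a a' b : R} (ha : IsMP a a') (h1 : a * b = b * a)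
    (h2 : star a * b = b * star a) : a' * b = b * a' := by
  have hp := key_p ha h1 h2
  have K1 := lemK1 ha h2
  have h : b * a' = a' * b := by
    calc b * a' = b * (a' * a * a') := by rw [ha.2.1]
      _ = b * (a' * a) * a' := by rw [← mul_assoc]
      _ = (a' * a) * b * a' := by rw [hp]
      _ = a' * (a * b) * a' := by simp only [mul_assoc]
      _ = a' * (b * a) * a' := by rw [h1]
      _ = a' * b * (a * a') := by simp only [mul_assoc]
      _ = a' * b := K1.symm
  exact h.symm

omit [StarRing R] in
lemma swap_lem {x y : R} (h : x * y = y * x) : ∀ z : R, x * (y * z) = y * (x * z) := by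
  intro z; rw [← mul_assoc, h, mul_assoc]

end Helpers

theorem stmt1 {R : Type*} [Ring R] [StarRing R] (a b a' b' : R)
    (ha : IsMP a a') (hb : IsMP b b')
    (hcomm : a * b = b * a) (hscomm : star a * b = b * star a) :
    IsMP (a * b) (b' * a') ∧ b' * a' = a' * b' := by
  -- derived commutations of star b with a, star a
  have hsb_a : star b * a = a * star b := by
    have := congrArg star hscomm
    simpa [star_mul] using this
  have hss : star a * star b = star b * star a := by
    have := congrArg star hcomm
    simpa [star_mul] using this.symm
  -- element-level commutations
  have ca'b : a' * b = b * a' := key_inv ha hcomm hscomm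
  have ca'sb : a' * star b = star b * a' := key_inv ha hsb_a.symm hss
  have cb'a : b' * a = a * b' := key_inv hb hcomm.symm hsb_a
  have cb'a' : b' * a' = a' * b' := key_inv hb ca'b.symm ca'sb.symm
  -- sorting lemmas (move b-letters to the right)
  have s1 : b * a = a * b := hcomm.symm
  have s2 : b * a' = a' * b := ca'b.symm
  have s3 : b' * a = a * b' := cb'a
  have s4 : b' * a' = a' * b' := cb'a'
  have s1' := swap_lem s1
  have s2' := swap_lem s2
  have s3' := swap_lem s3
  have s4' := swap_lem s4
  obtain ⟨ea1, ea2, ea3, ea4⟩ := ha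
  obtain ⟨eb1, eb2, eb3, eb4⟩ := hb
  -- reduction lemmas in right-associated form
  have A1 : a * (a' * a) = a := by rw [← mul_assoc, ea1]
  have A1' : ∀ z : R, a * (a' * (a * z)) = a * z := by
    intro z; rw [← mul_assoc, ← mul_assoc, ea1]
  have A2 : a' * (a * a') = a' := by rw [← mul_assoc, ea2]
  have A2' : ∀ z : R, a' * (a * (a' * z)) = a' * z := by
    intro z; rw [← mul_assoc, ← mul_assoc, ea2]
  have B1 : b * (b' * b) = b := by rw [← mul_assoc, eb1]
  have B1' : ∀ z : R, b * (b' * (b * z)) = b * z := by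
    intro z; rw [← mul_assoc, ← mul_assoc, eb1]
  have B2 : b' * (b * b') = b' := by rw [← mul_assoc, eb2]
  have B2' : ∀ z : R, b' * (b * (b' * z)) = b' * z := by
    intro z; rw [← mul_assoc, ← mul_assoc, eb2]
  refine ⟨⟨?_, ?_, ?_, ?_⟩, cb'a'⟩
  · simp only [mul_assoc]
    simp only [s1, s2, s3, s4, s1', s2', s3', s4', A1, A1', A2, A2', B1, B1', B2, B2']
  · simp only [mul_assoc]
    simp only [s1, s2, s3, s4, s1', s2', s3', s4', A1, A1', A2, A2', B1, B1', B2, B2']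
  · have W : a * b * (b' * a') = (a * a') * (b * b') := by
      simp only [mul_assoc]
      simp only [s1, s2, s3, s4, s1', s2', s3', s4']
    rw [W, star_mul, eb3, ea3]
    simp only [mul_assoc]
    simp only [s1, s2, s3, s4, s1', s2', s3', s4']
  · have W : (b' * a') * (a * b) = (a' * a) * (b' * b) := by
      simp only [mul_assoc]
      simp only [s1, s2, s3, s4, s1', s2', s3', s4']
    rw [W, star_mul, eb4, ea4]
    simp only [mul_assoc]
    simp only [s1, s2, s3, s4, s1', s2', s3', s4']
end

section
/- Let R be a ring with involution and a, b ∈ R Moore-Penrose invertible with a*b = 0 and ab* = 0. Then a + b is Moore-Penrose invertible and (a+b)† = a† + b†. -/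
theorem stmt2 {R : Type*} [Ring R] [StarRing R] (a b a' b' : R)
    (ha : IsMP a a') (hb : IsMP b b')
    (h1 : star a * b = 0) (h2 : a * star b = 0) :
    IsMP (a + b) (a' + b') := by
  obtain ⟨ha1, ha2, ha3, ha4⟩ := ha
  obtain ⟨hb1, hb2, hb3, hb4⟩ := hb
  have h3 : star b * a = 0 := by
    have := congrArg star h1; simpa [star_mul] using this
  have h4 : b * star a = 0 := by
    have := congrArg star h2; simpa [star_mul] using this
  have hA : a * a' = star a' * star a := by rw [← ha3, star_mul]
  have hA' : a' * a = star a * star a' := by rw [← ha4, star_mul]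
  have hB : b * b' = star b' * star b := by rw [← hb3, star_mul]
  have hB' : b' * b = star b * star b' := by rw [← hb4, star_mul]
  have e1 : a' * b = 0 := by
    calc a' * b = a' * (a * a') * b := by rw [← mul_assoc, ha2]
      _ = a' * star a' * (star a * b) := by rw [hA]; noncomm_ring
      _ = 0 := by rw [h1, mul_zero]
  have e2 : b' * a = 0 := by
    calc b' * a = b' * (b * b') * a := by rw [← mul_assoc, hb2]
      _ = b' * star b' * (star b * a) := by rw [hB]; noncomm_ring
      _ = 0 := by rw [h3, mul_zero]
  have e3 : a * b' = 0 := by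
    calc a * b' = a * (b' * b) * b' := by rw [mul_assoc, hb2]
      _ = a * star b * (star b' * b') := by rw [hB']; noncomm_ring
      _ = 0 := by rw [h2, zero_mul]
  have e4 : b * a' = 0 := by
    calc b * a' = b * (a' * a) * a' := by rw [mul_assoc, ha2]
      _ = b * star a * (star a' * a') := by rw [hA']; noncomm_ring
      _ = 0 := by rw [h4, zero_mul]
  have key1 : (a + b) * (a' + b') = a * a' + b * b' := by
    rw [add_mul, mul_add, mul_add, e3, e4]; abel
  have key2 : (a' + b') * (a + b) = a' * a + b' * b := by
    rw [add_mul, mul_add, mul_add, e1, e2]; abel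
  refine ⟨?_, ?_, ?_, ?_⟩
  · rw [key1]
    calc (a * a' + b * b') * (a + b)
        = a * a' * a + a * (a' * b) + (b * (b' * a) + b * b' * b) := by noncomm_ring
      _ = a + b := by rw [e1, e2, ha1, hb1, mul_zero, mul_zero, add_zero, zero_add]
  · rw [key2]
    calc (a' * a + b' * b) * (a' + b')
        = a' * a * a' + a' * (a * b') + (b' * (b * a') + b' * b * b') := by noncomm_ring
      _ = a' + b' := by rw [e3, e4, ha2, hb2, mul_zero, mul_zero, add_zero, zero_add]
  · rw [key1, star_add, ha3, hb3]
  · rw [key2, star_add, ha4, hb4]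
end

section
/- Let R be a *-ring and p, q projectors in R such that p(1-q) and q(1-p) are *-cancellable. Then 1 - pqp is Moore-Penrose invertible if and only if p - pqp is Moore-Penrose invertible. -/
/-- If `a` lies in the corner `pRp`, then `a + (1-p)` is MP-invertible iff `a` is. -/
theorem corner_aux {R : Type*} [Ring R] [StarRing R] {p a : R}
    (hp2 : p * p = p) (hps : star p = p) (hpa : p * a = a) (hap : a * p = a) :
    (∃ y, IsMP (a + (1 - p)) y) ↔ (∃ x, IsMP a x) := by
  set b := a + (1 - p) with hb
  have s1p : star ((1 : R) - p) = 1 - p := by rw [star_sub, star_one, hps]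
  have pb : p * b = a := by
    have h : p * b = p * a + (p - p * p) := by rw [hb]; noncomm_ring
    rw [h, hpa, hp2, sub_self, add_zero]
  have bp : b * p = a := by
    have h : b * p = a * p + (p - p * p) := by rw [hb]; noncomm_ring
    rw [h, hap, hp2, sub_self, add_zero]
  have p1b : (1 - p) * b = 1 - p := by
    have h : (1 - p) * b = b - p * b := by noncomm_ring
    rw [h, pb, hb]; abel
  have b1p : b * (1 - p) = 1 - p := by
    have h : b * (1 - p) = b - b * p := by noncomm_ring
    rw [h, bp, hb]; abel
  constructor
  · rintro ⟨y, h1, h2, h3, h4⟩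
    -- e := b*y commutes with p
    have e1 : (b * y) * (1 - p) = 1 - p := by
      calc (b * y) * (1 - p) = (b * y) * (b * (1 - p)) := by rw [b1p]
        _ = (b * y * b) * (1 - p) := by noncomm_ring
        _ = b * (1 - p) := by rw [h1]
        _ = 1 - p := b1p
    have e2 : (1 - p) * (b * y) = 1 - p := by
      have := congrArg star e1
      rwa [star_mul, s1p, h3] at this
    have comm_e : (b * y) * p = p * (b * y) := by
      have h5 : (b * y) * p = b * y - (b * y) * (1 - p) := by noncomm_ring
      have h6 : p * (b * y) = b * y - (1 - p) * (b * y) := by noncomm_ring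
      rw [h5, h6, e1, e2]
    -- f := y*b commutes with p
    have f1 : (1 - p) * (y * b) = 1 - p := by
      calc (1 - p) * (y * b) = ((1 - p) * b) * (y * b) := by rw [p1b]
        _ = (1 - p) * (b * y * b) := by noncomm_ring
        _ = (1 - p) * b := by rw [h1]
        _ = 1 - p := p1b
    have f2 : (y * b) * (1 - p) = 1 - p := by
      have := congrArg star f1
      rwa [star_mul, s1p, h4] at this
    have comm_f : (y * b) * p = p * (y * b) := by
      have h5 : (y * b) * p = y * b - (y * b) * (1 - p) := by noncomm_ring
      have h6 : p * (y * b) = y * b - (1 - p) * (y * b) := by noncomm_ring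
      rw [h5, h6, f1, f2]
    have aya : a * y * a = a := by
      calc a * y * a = (p * b) * y * (b * p) := by rw [pb, bp]
        _ = p * (b * y * b) * p := by noncomm_ring
        _ = p * b * p := by rw [h1]
        _ = a * p := by rw [mul_assoc, bp, hpa, hap]
        _ = a := hap
    refine ⟨y * a * y, ?_, ?_, ?_, ?_⟩
    · calc a * (y * a * y) * a = (a * y * a) * (y * a) := by noncomm_ring
        _ = a * (y * a) := by rw [aya]
        _ = a := by rw [← mul_assoc, aya]
    · calc (y * a * y) * a * (y * a * y) = y * (a * y * a) * (y * a * y) := by noncomm_ring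
        _ = y * a * (y * a * y) := by rw [aya]
        _ = y * (a * y * a) * y := by noncomm_ring
        _ = y * a * y := by rw [aya]
    · have ax_ay : a * (y * a * y) = a * y := by
        calc a * (y * a * y) = (a * y * a) * y := by noncomm_ring
          _ = a * y := by rw [aya]
      have hay : a * y = p * (b * y) := by rw [← pb, mul_assoc]
      rw [ax_ay, hay]
      calc star (p * (b * y)) = star (b * y) * star p := by rw [star_mul]
        _ = (b * y) * p := by rw [h3, hps]
        _ = p * (b * y) := comm_e
    · have ya_eq : (y * a * y) * a = y * a := by
        calc (y * a * y) * a = y * (a * y * a) := by noncomm_ring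
          _ = y * a := by rw [aya]
      have hya : y * a = (y * b) * p := by rw [← bp, ← mul_assoc]
      rw [ya_eq, hya]
      calc star ((y * b) * p) = star p * star (y * b) := by rw [star_mul]
        _ = p * (y * b) := by rw [h4, hps]
        _ = (y * b) * p := comm_f.symm
  · rintro ⟨x, k1, k2, k3, k4⟩
    have pax : p * (a * x) = a * x := by rw [← mul_assoc, hpa]
    have axp : (a * x) * p = a * x := by
      have := congrArg star pax
      rwa [star_mul, hps, k3] at this
    have xap : (x * a) * p = x * a := by rw [mul_assoc, hap]
    have pxa : p * (x * a) = x * a := by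
      have := congrArg star xap
      rwa [star_mul, hps, k4] at this
    have xp : x * p = x := by
      calc x * p = (x * a * x) * p := by rw [k2]
        _ = x * ((a * x) * p) := by noncomm_ring
        _ = x * (a * x) := by rw [axp]
        _ = x := by rw [← mul_assoc, k2]
    have px : p * x = x := by
      calc p * x = p * (x * a * x) := by rw [k2]
        _ = (p * (x * a)) * x := by noncomm_ring
        _ = (x * a) * x := by rw [pxa]
        _ = x := k2
    have ha1p : a * (1 - p) = 0 := by rw [mul_sub, mul_one, hap, sub_self]
    have h1pa : (1 - p) * a = 0 := by rw [sub_mul, one_mul, hpa, sub_self]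
    have hx1p : x * (1 - p) = 0 := by rw [mul_sub, mul_one, xp, sub_self]
    have h1px : (1 - p) * x = 0 := by rw [sub_mul, one_mul, px, sub_self]
    have h1p1p : ((1 : R) - p) * (1 - p) = 1 - p := by
      have h : ((1 : R) - p) * (1 - p) = 1 - p - p + p * p := by noncomm_ring
      rw [h, hp2]; abel
    have by_eq : b * (x + (1 - p)) = a * x + (1 - p) := by
      have h : b * (x + (1 - p)) =
          a * x + a * (1 - p) + (1 - p) * x + (1 - p) * (1 - p) := by
        rw [hb]; noncomm_ring
      rw [h, ha1p, h1px, h1p1p, add_zero, add_zero]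
    have yb_eq : (x + (1 - p)) * b = x * a + (1 - p) := by
      have h : (x + (1 - p)) * b =
          x * a + x * (1 - p) + (1 - p) * a + (1 - p) * (1 - p) := by
        rw [hb]; noncomm_ring
      rw [h, hx1p, h1pa, h1p1p, add_zero, add_zero]
    refine ⟨x + (1 - p), ?_, ?_, ?_, ?_⟩
    · rw [by_eq]
      have h : (a * x + (1 - p)) * b =
          a * x * a + (a * x) * (1 - p) + (1 - p) * a + (1 - p) * (1 - p) := by
        rw [hb]; noncomm_ring
      have hax1p : (a * x) * (1 - p) = 0 := by rw [mul_sub, mul_one, axp, sub_self]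
      rw [h, k1, hax1p, h1pa, h1p1p, add_zero, add_zero, hb]
    · rw [yb_eq]
      have h : (x * a + (1 - p)) * (x + (1 - p)) =
          x * a * x + (x * a) * (1 - p) + (1 - p) * x + (1 - p) * (1 - p) := by
        noncomm_ring
      have hxa1p : (x * a) * (1 - p) = 0 := by rw [mul_sub, mul_one, xap, sub_self]
      rw [h, k2, hxa1p, h1px, h1p1p, add_zero, add_zero]
    · rw [by_eq, star_add, k3, s1p]
    · rw [yb_eq, star_add, k4, s1p]

theorem stmt4 {R : Type*} [Ring R] [StarRing R] (p q : R)
    (hp : IsProjector p) (hq : IsProjector q)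
    (hc1 : StarCancellable (p * (1 - q))) (hc2 : StarCancellable (q * (1 - p))) :
    (∃ x, IsMP (1 - p * q * p) x) ↔ (∃ x, IsMP (p - p * q * p) x) := by
  have hpa : p * (p - p * q * p) = p - p * q * p := by
    have h : p * (p - p * q * p) = p * p - ((p * p) * q) * p := by noncomm_ring
    rw [h, hp.1]
  have hap : (p - p * q * p) * p = p - p * q * p := by
    have h : (p - p * q * p) * p = p * p - (p * q) * (p * p) := by noncomm_ring
    rw [h, hp.1]
  have key : (1 : R) - p * q * p = (p - p * q * p) + (1 - p) := by abel
  rw [key]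
  exact corner_aux hp.1 hp.2 hpa hap
end

section
/- Let R be a *-ring and p, q projectors in R such that p(1-q) is *-cancellable. Then p - pqp is Moore-Penrose invertible if and only if p - pq is Moore-Penrose invertible. -/
lemma mp_unique {R : Type*} [Ring R] [StarRing R] {a b b' : R}
    (h : IsMP a b) (h' : IsMP a b') : b = b' := by
  obtain ⟨h1, h2, h3, h4⟩ := h
  obtain ⟨h1', h2', h3', h4'⟩ := h'
  have hab : a * b = a * b' := by
    calc a * b = star (a * b) := h3.symm
      _ = star b * star a := by rw [star_mul]
      _ = star b * star (a * b' * a) := by rw [h1']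
      _ = star b * (star a * star (a * b')) := by rw [star_mul (a * b') a]
      _ = (star b * star a) * (a * b') := by rw [h3', mul_assoc]
      _ = star (a * b) * (a * b') := by rw [star_mul]
      _ = a * b * a * b' := by rw [h3]; noncomm_ring
      _ = a * b' := by rw [h1]
  have hba : b * a = b' * a := by
    calc b * a = star (b * a) := h4.symm
      _ = star a * star b := by rw [star_mul]
      _ = star (a * b' * a) * star b := by rw [h1']
      _ = star (b' * a) * star (b * a) := by simp [star_mul, mul_assoc]
      _ = b' * a * (b * a) := by rw [h4', h4]
      _ = b' * (a * b * a) := by noncomm_ring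
      _ = b' * a := by rw [h1]
  calc b = b * a * b := h2.symm
    _ = b' * a * b := by rw [hba]
    _ = b' * (a * b') := by rw [mul_assoc, hab]
    _ = b' := by rw [← mul_assoc, h2']

lemma mp_aastar_iff {R : Type*} [Ring R] [StarRing R] {a : R} (hc : StarCancellable a) :
    (∃ x, IsMP (a * star a) x) ↔ ∃ x, IsMP a x := by
  constructor
  · rintro ⟨c, hmc⟩
    -- first show c is hermitian, via uniqueness
    have hd : star (a * star a) = a * star a := by rw [star_mul, star_star]
    have hmc' : IsMP (a * star a) (star c) := by
      obtain ⟨h1, h2, h3, h4⟩ := hmc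
      refine ⟨?_, ?_, ?_, ?_⟩
      · have := congrArg star h1
        simpa [star_mul, star_star, mul_assoc] using this
      · have := congrArg star h2
        simpa [star_mul, star_star, mul_assoc] using this
      · rw [show a * star a * star c = star (c * (a * star a)) from by rw [star_mul, hd],
          star_star, h4]
      · rw [show star c * (a * star a) = star (a * star a * c) from by rw [star_mul, hd],
          star_star, h3]
    have hch : star c = c := (mp_unique hmc' hmc)
    obtain ⟨h1, h2, h3, h4⟩ := hmc
    -- key : a * star a * c * a = a
    have key : a * star a * c * a = a := by
      have hz : (a * star a * c - 1) * (a * star a) = 0 := by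
        have : a * star a * c * (a * star a) = a * star a := by
          have := h1; rw [mul_assoc] at this ⊢; exact this
        rw [sub_mul, one_mul, this, sub_self]
      have := hc.2 _ hz
      rw [sub_mul, one_mul, sub_eq_zero] at this
      exact this
    refine ⟨star a * c, ?_, ?_, ?_, ?_⟩
    · calc a * (star a * c) * a = a * star a * c * a := by noncomm_ring
        _ = a := key
    · calc star a * c * a * (star a * c) = star a * (c * (a * star a) * c) := by
            simp [mul_assoc]
        _ = star a * c := by rw [h2]
    · have : a * (star a * c) = a * star a * c := by rw [mul_assoc]
      rw [this, h3]
    · calc star (star a * c * a) = star a * star c * a := by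
            rw [star_mul, star_mul, star_star, mul_assoc]
        _ = star a * c * a := by rw [hch]
  · rintro ⟨b, h1, h2, h3, h4⟩
    -- key : a * star a * star b = a
    have key : a * star a * star b = a := by
      calc a * star a * star b = a * star (b * a) := by rw [mul_assoc, ← star_mul]
        _ = a * (b * a) := by rw [h4]
        _ = a := by rw [← mul_assoc, h1]
    have key2 : b * (a * star a) = star a := by
      have := congrArg star key
      rwa [star_mul, star_mul, star_star, star_star] at this
    refine ⟨star b * b, ?_, ?_, ?_, ?_⟩
    · calc a * star a * (star b * b) * (a * star a)
          = (a * star a * star b) * (b * a) * star a := by simp [mul_assoc]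
        _ = a * (b * a) * star a := by rw [key]
        _ = a * star a := by rw [← mul_assoc, h1]
    · calc star b * b * (a * star a) * (star b * b)
          = star b * (b * (a * star a * star b)) * b := by simp [mul_assoc]
        _ = star b * (b * a) * b := by rw [key]
        _ = star b * b := by rw [mul_assoc (star b) (b * a) b, h2]
    · have : a * star a * (star b * b) = a * b := by
        rw [← mul_assoc, key]
      rw [this, h3]
    · have : star b * b * (a * star a) = star b * star a := by
        rw [mul_assoc, key2]
      rw [this, ← star_mul, star_star, h3]

theorem stmt5 {R : Type*} [Ring R] [StarRing R] (p q : R)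
    (hp : IsProjector p) (hq : IsProjector q)
    (hc : StarCancellable (p * (1 - q))) :
    (∃ x, IsMP (p - p * q * p) x) ↔ (∃ x, IsMP (p - p * q) x) := by
  obtain ⟨hp2, hps⟩ := hp
  obtain ⟨hq2, hqs⟩ := hq
  have ha : p * (1 - q) = p - p * q := by noncomm_ring
  have hsa : star (p * (1 - q)) = (1 - q) * p := by
    rw [star_mul, star_sub, star_one, hqs, hps]
  have haa : p * (1 - q) * star (p * (1 - q)) = p - p * q * p := by
    rw [hsa]
    have h1q : (1 - q) * (1 - q) = 1 - q := by
      have : (1 - q) * (1 - q) = 1 - q - q + q * q := by noncomm_ring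
      rw [this, hq2]; abel
    calc p * (1 - q) * ((1 - q) * p) = p * ((1 - q) * (1 - q)) * p := by simp [mul_assoc]
      _ = p * (1 - q) * p := by rw [h1q]
      _ = p - p * q * p := by
            have : p * (1 - q) * p = p * p - p * q * p := by noncomm_ring
            rw [this, hp2]
  have := mp_aastar_iff hc
  rw [haa, ha] at this
  exact this
end

section
/- Let R be a *-ring, p, q projectors with p - q Moore-Penrose invertible, and F = p(p-q)†. Then F² = F and F = (p-q)†(1-q). -/
theorem stmt8 {R : Type*} [Ring R] [StarRing R] (p q d : R)
    (hp : IsProjector p) (hq : IsProjector q)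
    (hd : IsMP (p - q) d) :
    (p * d) * (p * d) = p * d ∧ p * d = d * (1 - q) := by
  obtain ⟨hp1, hp2⟩ := hp
  obtain ⟨hq1, hq2⟩ := hq
  set a : R := p - q with ha_def
  obtain ⟨h1, h2, h3, h4⟩ := hd
  have ha : star a = a := by rw [ha_def, star_sub, hp2, hq2]
  set c : R := star d with hc_def
  -- star of MP equations
  have c1 : a * c * a = a := by
    have := congrArg star h1
    rwa [star_mul, star_mul, ha, ← hc_def, ← mul_assoc] at this
  have c2 : c * a * c = c := by
    have := congrArg star h2
    rwa [star_mul, star_mul, ha, ← hc_def, ← mul_assoc] at this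
  have c3 : a * c = d * a := by
    have h : star (d * a) = a * c := by rw [star_mul, ha, ← hc_def]
    rw [← h, h4]
  have c4 : c * a = a * d := by
    have h : star (a * d) = c * a := by rw [star_mul, ha, ← hc_def]
    rw [← h, h3]
  -- d is self-adjoint (uniqueness argument)
  have hda_ca : d * a = c * a := by
    have e1 : d * a = (d * a) * (c * a) := by
      conv_lhs => rw [← c1]
      noncomm_ring
    have e2 : (d * a) * (c * a) = star ((c * a) * (d * a)) := by
      rw [star_mul, h4, c4, h3]
    have e3 : (c * a) * (d * a) = c * a := by
      calc (c * a) * (d * a) = c * (a * d * a) := by noncomm_ring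
        _ = c * a := by rw [h1]
    rw [e1, e2, e3, c4, h3]
  have had_ac : a * d = a * c := by
    have e1 : a * d = (a * c) * (a * d) := by
      conv_lhs => rw [← c1]
      noncomm_ring
    have e2 : (a * c) * (a * d) = star ((a * d) * (a * c)) := by
      rw [star_mul, h3, c3, h4]
    have e3 : (a * d) * (a * c) = a * c := by
      calc (a * d) * (a * c) = (a * d * a) * c := by noncomm_ring
        _ = a * c := by rw [h1]
    rw [e1, e2, e3, c3, h4]
  have hdc : d = c := by
    calc d = d * a * d := h2.symm
      _ = (c * a) * d := by rw [hda_ca]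
      _ = c * (a * d) := by rw [mul_assoc]
      _ = c * (a * c) := by rw [had_ac]
      _ = c * a * c := by rw [mul_assoc]
      _ = c := c2
  -- a and d commute
  have hcomm : a * d = d * a := by rw [← c4, ← hdc, ← c3, ← hdc]
  -- basic identities about the projection a*d
  have hEd : (a * d) * d = d := by
    calc (a * d) * d = (d * a) * d := by rw [hcomm]
      _ = d * a * d := by noncomm_ring
      _ = d := h2
  have hxy : (a * a) * (d * d) = a * d := by
    calc (a * a) * (d * d) = a * ((a * d) * d) := by noncomm_ring
      _ = a * d := by rw [hEd]
  have hyx : (d * d) * (a * a) = a * d := by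
    calc (d * d) * (a * a) = (d * (a * d)) * a := by rw [hcomm]; noncomm_ring
      _ = (d * a * d) * a := by noncomm_ring
      _ = d * a := by rw [h2]
      _ = a * d := hcomm.symm
  have hEx : (a * d) * (a * a) = a * a := by
    calc (a * d) * (a * a) = (a * d * a) * a := by noncomm_ring
      _ = a * a := by rw [h1]
  have hEy : (a * d) * (d * d) = d * d := by
    calc (a * d) * (d * d) = ((a * d) * d) * d := by noncomm_ring
      _ = d * d := by rw [hEd]
  have hyE : (d * d) * (a * d) = d * d := by
    calc (d * d) * (a * d) = d * (d * a * d) := by noncomm_ring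
      _ = d * d := by rw [h2]
  -- key lemma: a self-adjoint element commuting with a² commutes with d²
  have key : ∀ z : R, star z = z → z * (a * a) = (a * a) * z →
      z * (d * d) = (d * d) * z := by
    intro z hz hzx
    have st1 : z * (a * a) = (a * d) * (z * (a * a)) := by
      calc z * (a * a) = (a * a) * z := hzx
        _ = ((a * d) * (a * a)) * z := by rw [hEx]
        _ = (a * d) * ((a * a) * z) := by rw [mul_assoc]
        _ = (a * d) * (z * (a * a)) := by rw [hzx]
    have st2 : z * (a * d) = (a * d) * (z * (a * d)) := by
      calc z * (a * d) = z * ((a * a) * (d * d)) := by rw [hxy]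
        _ = (z * (a * a)) * (d * d) := by noncomm_ring
        _ = ((a * d) * (z * (a * a))) * (d * d) := by rw [← st1]
        _ = (a * d) * (z * ((a * a) * (d * d))) := by noncomm_ring
        _ = (a * d) * (z * (a * d)) := by rw [hxy]
    have hez : (a * d) * z = z * (a * d) := by
      have h5 : star (z * (a * d)) = (a * d) * z := by
        rw [star_mul, h3, hz]
      have h6 : star ((a * d) * (z * (a * d))) = ((a * d) * z) * (a * d) := by
        rw [star_mul, h5, h3]
      have hst : (a * d) * z = ((a * d) * z) * (a * d) := by
        rw [← h6, ← h5]; exact congrArg star st2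
      calc (a * d) * z = ((a * d) * z) * (a * d) := hst
        _ = (a * d) * (z * (a * d)) := by noncomm_ring
        _ = z * (a * d) := st2.symm
    calc z * (d * d) = (z * ((a * d) * (d * d))) := by rw [hEy]
      _ = (z * (a * d)) * (d * d) := by noncomm_ring
      _ = ((a * d) * z) * (d * d) := by rw [hez]
      _ = (a * d) * (z * (d * d)) := by rw [mul_assoc]
      _ = ((d * d) * (a * a)) * (z * (d * d)) := by rw [hyx]
      _ = (d * d) * (((a * a) * z) * (d * d)) := by noncomm_ring
      _ = (d * d) * ((z * (a * a)) * (d * d)) := by rw [hzx]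
      _ = (d * d) * (z * ((a * a) * (d * d))) := by noncomm_ring
      _ = (d * d) * (z * (a * d)) := by rw [hxy]
      _ = (d * d) * ((a * d) * z) := by rw [hez]
      _ = ((d * d) * (a * d)) * z := by noncomm_ring
      _ = (d * d) * z := by rw [hyE]
  -- p commutes with a²
  have haa : a * a = p + q - p * q - q * p := by
    have h : a * a = p * p + q * q - p * q - q * p := by
      rw [ha_def]; noncomm_ring
    rw [h, hp1, hq1]
  have hpx : p * (a * a) = (a * a) * p := by
    have l : p * (p + q - p * q - q * p) = p - p * q * p := by
      calc p * (p + q - p * q - q * p)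
          = p * p + p * q - p * p * q - p * (q * p) := by noncomm_ring
        _ = p + p * q - p * q - p * (q * p) := by rw [hp1]
        _ = p - p * q * p := by noncomm_ring
    have r : (p + q - p * q - q * p) * p = p - p * q * p := by
      calc (p + q - p * q - q * p) * p
          = p * p + q * p - p * q * p - q * (p * p) := by noncomm_ring
        _ = p + q * p - p * q * p - q * p := by rw [hp1]
        _ = p - p * q * p := by noncomm_ring
    rw [haa, l, r]
  have hpd2 : p * (d * d) = (d * d) * p := key p hp2 hpx
  -- finish
  have hd2a : d = (d * d) * a := by
    calc d = d * a * d := h2.symm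
      _ = d * (a * d) := by rw [mul_assoc]
      _ = d * (d * a) := by rw [hcomm]
      _ = (d * d) * a := by noncomm_ring
  have hpa : p * a = p - p * q := by rw [ha_def, mul_sub, hp1]
  have haq : a * (1 - q) = p - p * q := by
    calc a * (1 - q) = p - q - (p * q - q * q) := by rw [ha_def]; noncomm_ring
      _ = p - p * q := by rw [hq1]; abel
  have main2 : p * d = d * (1 - q) := by
    calc p * d = p * ((d * d) * a) := by rw [← hd2a]
      _ = (p * (d * d)) * a := by noncomm_ring
      _ = ((d * d) * p) * a := by rw [hpd2]
      _ = (d * d) * (p * a) := by rw [mul_assoc]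
      _ = (d * d) * (p - p * q) := by rw [hpa]
      _ = (d * d) * (a * (1 - q)) := by rw [haq]
      _ = ((d * d) * a) * (1 - q) := by noncomm_ring
      _ = d * (1 - q) := by rw [← hd2a]
  have hp1q : p * (1 - q) = p - p * q := by rw [mul_sub, mul_one]
  have main1' : (p * d) * (d * (1 - q)) = p * d := by
    calc (p * d) * (d * (1 - q)) = (p * (d * d)) * (1 - q) := by noncomm_ring
      _ = ((d * d) * p) * (1 - q) := by rw [hpd2]
      _ = (d * d) * (p * (1 - q)) := by rw [mul_assoc]
      _ = (d * d) * (p - p * q) := by rw [hp1q]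
      _ = (d * d) * (p * a) := by rw [← hpa]
      _ = ((d * d) * p) * a := by noncomm_ring
      _ = (p * (d * d)) * a := by rw [← hpd2]
      _ = p * ((d * d) * a) := by rw [mul_assoc]
      _ = p * d := by rw [← hd2a]
  rw [← main2] at main1'
  exact ⟨main1', main2⟩
end

section
/- Let R be a *-ring and p, q projectors with p - q Moore-Penrose invertible. Then (p-q)† = p(p-q)† + (p-q)†p - (p-q)(p-q)†. -/
theorem MP_unique {R : Type*} [Ring R] [StarRing R] {a b c : R}
    (hb : IsMP a b) (hc : IsMP a c) : b = c := by
  obtain ⟨hb1, hb2, hb3, hb4⟩ := hb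
  obtain ⟨hc1, hc2, hc3, hc4⟩ := hc
  have hab : a * b = a * c := by
    calc a * b = (a*c*a)*b := by rw [hc1]
    _ = (a*c)*(a*b) := by noncomm_ring
    _ = star (a*c) * star (a*b) := by rw [hc3, hb3]
    _ = star ((a*b)*(a*c)) := (star_mul _ _).symm
    _ = star ((a*b*a)*c) := by rw [show (a*b)*(a*c) = (a*b*a)*c by noncomm_ring]
    _ = star (a * c) := by rw [hb1]
    _ = a * c := hc3
  have hba : b * a = c * a := by
    calc b * a = b*(a*c*a) := by rw [hc1]
    _ = (b*a)*(c*a) := by noncomm_ring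
    _ = star (b*a) * star (c*a) := by rw [hc4, hb4]
    _ = star ((c*a)*(b*a)) := (star_mul _ _).symm
    _ = star (c*(a*b*a)) := by rw [show (c*a)*(b*a) = c*(a*b*a) by noncomm_ring]
    _ = star (c*a) := by rw [hb1]
    _ = c * a := hc4
  calc b = b*a*b := hb2.symm
  _ = c*a*b := by rw [hba]
  _ = c*(a*b) := by rw [mul_assoc]
  _ = c*(a*c) := by rw [hab]
  _ = c*a*c := by rw [← mul_assoc]
  _ = c := hc2

theorem stmt13 {R : Type*} [Ring R] [StarRing R] (p q d : R)
    (hp : IsProjector p) (hq : IsProjector q)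
    (hd : IsMP (p - q) d) :
    d = p * d + d * p - (p - q) * d := by
  obtain ⟨hp1, hp2⟩ := hp
  obtain ⟨hq1, hq2⟩ := hq
  set a := p - q with ha
  obtain ⟨h1, h2, h3, h4⟩ := hd
  have hsa : star a = a := by rw [ha, star_sub, hp2, hq2]
  -- star d is also an MP inverse of a
  have hd' : IsMP a (star d) := by
    refine ⟨?_, ?_, ?_, ?_⟩
    · have := congrArg star h1
      simp only [star_mul, hsa, mul_assoc] at this
      rw [mul_assoc]; exact this
    · have := congrArg star h2
      simp only [star_mul, hsa, mul_assoc] at this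
      rw [mul_assoc]; exact this
    · have k : a * star d = d * a := by
        rw [← hsa, ← star_mul, hsa, h4]
      rw [k, h4]
    · have k : star d * a = a * d := by
        rw [← hsa, ← star_mul, hsa, h3]
      rw [k, h3]
  have hds : star d = d := MP_unique hd' ⟨h1, h2, h3, h4⟩
  have comm : d * a = a * d := by
    calc d * a = star (d * a) := h4.symm
    _ = star a * star d := star_mul _ _
    _ = a * d := by rw [hsa, hds]
  -- basic facts about e = a*d
  have hde : d * (a * d) = d := by rw [← mul_assoc]; exact h2
  have hdd : d * (d * a) = d := by rw [comm]; exact hde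
  have head : (a * d) * d = d := by rw [← comm]; exact h2
  have hae : a * (a * d) = a := by rw [← comm, ← mul_assoc, h1]
  set u := 1 - a * d with hu
  have hu1 : a * u = 0 := by rw [hu, mul_sub, mul_one, hae, sub_self]
  have hua : u * a = 0 := by rw [hu, sub_mul, one_mul, h1, sub_self]
  have hpq_u : p * u = q * u := by
    have h : p * u - q * u = 0 := by rw [← sub_mul, ← ha]; exact hu1
    exact sub_eq_zero.mp h
  have hqp_u : u * p = u * q := by
    have h : u * p - u * q = 0 := by rw [← mul_sub, ← ha]; exact hua
    exact sub_eq_zero.mp h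
  -- a * (p*u) = 0
  have hat : a * (p * u) = 0 := by
    calc a * (p * u) = p * (p * u) - q * (p * u) := by rw [ha]; noncomm_ring
    _ = p * p * u - q * (p * u) := by rw [mul_assoc]
    _ = p * u - q * (p * u) := by rw [hp1]
    _ = q * u - q * (q * u) := by rw [hpq_u]
    _ = q * u - q * q * u := by rw [mul_assoc]
    _ = q * u - q * u := by rw [hq1]
    _ = 0 := sub_self _
  have hdt : d * (p * u) = 0 := by
    calc d * (p * u) = (d * (d * a)) * (p * u) := by rw [hdd]
    _ = d * (d * (a * (p * u))) := by noncomm_ring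
    _ = 0 := by rw [hat, mul_zero, mul_zero]
  have hdpe : d * p * (a * d) = d * p := by
    calc d * p * (a * d) = d * p - d * (p * u) := by rw [hu]; noncomm_ring
    _ = d * p := by rw [hdt, sub_zero]
  -- (u*q)*a = 0
  have hsat : (u * q) * a = 0 := by
    calc (u * q) * a = (u * q) * p - (u * q) * q := by rw [ha]; noncomm_ring
    _ = (u * q) * p - u * (q * q) := by rw [mul_assoc u q q]
    _ = (u * q) * p - u * q := by rw [hq1]
    _ = (u * p) * p - u * q := by rw [hqp_u]
    _ = u * (p * p) - u * q := by rw [mul_assoc u p p]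
    _ = u * p - u * q := by rw [hp1]
    _ = u * q - u * q := by rw [hqp_u]
    _ = 0 := sub_self _
  have hsd : (u * q) * d = 0 := by
    have k : ((u * q) * a) * (d * d) = (u * q) * d := by
      calc ((u * q) * a) * (d * d) = (u * q) * ((a * d) * d) := by noncomm_ring
      _ = (u * q) * d := by rw [head]
    rw [← k, hsat, zero_mul]
  have hqde : (a * d) * (q * d) = q * d := by
    calc (a * d) * (q * d) = q * d - (u * q) * d := by rw [hu]; noncomm_ring
    _ = q * d := by rw [hsd, sub_zero]
  have key : d = d * p * (a * d) + (d * a) * (q * d) := by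
    have I1 : p * a + a * q = a := by
      calc p * a + a * q = p * p - q * q := by rw [ha]; noncomm_ring
      _ = p - q := by rw [hp1, hq1]
      _ = a := ha.symm
    calc d = d * a * d := h2.symm
    _ = d * (p * a + a * q) * d := by rw [I1]
    _ = d * p * (a * d) + (d * a) * (q * d) := by noncomm_ring
  have hfinal : d = d * p + q * d := by
    calc d = d * p * (a * d) + (d * a) * (q * d) := key
    _ = d * p + (a * d) * (q * d) := by rw [hdpe, comm]
    _ = d * p + q * d := by rw [hqde]
  calc d = d * p + q * d := hfinal
  _ = p * d + d * p - (p - q) * d := by noncomm_ring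
end

section
/- Let R be a *-ring in which 2 is invertible, p, q projectors with p - q Moore-Penrose invertible, and H = (p-q)(p-q)†. If pH = p, then p + q is Moore-Penrose invertible and (p+q)† = (p-q)†(p+q)(p-q)†. -/
theorem stmt14 {R : Type*} [Ring R] [StarRing R] (p q d : R)
    (h2 : IsUnit (2 : R))
    (hp : IsProjector p) (hq : IsProjector q)
    (hd : IsMP (p - q) d)
    (hH : p * ((p - q) * d) = p) :
    IsMP (p + q) (d * (p + q) * d) := by
  obtain ⟨hd1, hd2, hd3, hd4⟩ := hd
  obtain ⟨hp2, hps⟩ := hp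
  obtain ⟨hq2, hqs⟩ := hq
  set e := p - q with he_def
  set s := p + q with hs_def
  have hes : star e = e := by rw [he_def, star_sub, hps, hqs]
  set c := star d with hc_def
  -- c = star d satisfies the corresponding Penrose equations
  have hc1 : e * c * e = e := by
    have h := congrArg star hd1
    simpa [star_mul, hes, mul_assoc, ← hc_def] using h
  have hc2 : c * e * c = c := by
    have h := congrArg star hd2
    simpa [star_mul, hes, mul_assoc, ← hc_def] using h
  have hec : e * c = d * e := by
    conv_lhs => rw [hc_def, ← hes]
    rw [← star_mul, hd4]
  have hce : c * e = e * d := by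
    conv_lhs => rw [hc_def, ← hes]
    rw [← star_mul, hd3]
  have hsec : star (e * c) = e * c := by rw [hec]; exact hd4
  -- e * d = d * e
  have hde : e * d = d * e := by
    calc e * d = star (e * d) := hd3.symm
      _ = star ((e * c) * (e * d)) := by
          rw [show (e * c) * (e * d) = (e * c * e) * d by noncomm_ring, hc1]
      _ = star (e * d) * star (e * c) := star_mul _ _
      _ = (e * d) * (e * c) := by rw [hd3, hsec]
      _ = (e * d * e) * c := by noncomm_ring
      _ = e * c := by rw [hd1]
      _ = d * e := hec
  -- s*s and e*s + s*e identities
  have hss : s * s = 2 * s - e * e := by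
    have h : s * s - (2 * s - e * e) =
        2 * (p * p) - 2 * p + (2 * (q * q) - 2 * q) := by
      rw [hs_def, he_def]; noncomm_ring
    rw [hp2, hq2] at h
    have h0 : s * s - (2 * s - e * e) = 0 := by rw [h]; abel
    exact sub_eq_zero.mp h0
  have hese : e * s + s * e = 2 * e := by
    have h : e * s + s * e - 2 * e =
        2 * (p * p) - 2 * p - (2 * (q * q) - 2 * q) := by
      rw [hs_def, he_def]; noncomm_ring
    rw [hp2, hq2] at h
    have h0 : e * s + s * e - 2 * e = 0 := by rw [h]; abel
    exact sub_eq_zero.mp h0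
  -- H := e*d acts as the identity on p, q, e, s
  have hpH : p * (e * d) = p := hH
  have hHp : (e * d) * p = p := by
    have h := congrArg star hH
    simpa [star_mul, hps, hd3] using h
  have heH : e * (e * d) = e := by
    rw [hde, ← mul_assoc, hd1]
  have hHe : (e * d) * e = e := hd1
  have hqH : q * (e * d) = q := by
    have h : q * (e * d) = p * (e * d) - e * (e * d) := by
      rw [he_def]; noncomm_ring
    rw [hpH, heH] at h
    rw [h, he_def]; noncomm_ring
  have hHq : (e * d) * q = q := by
    have h : (e * d) * q = (e * d) * p - (e * d) * e := by
      rw [he_def]; noncomm_ring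
    rw [hHp, hHe] at h
    rw [h, he_def]; noncomm_ring
  have hsH : s * (e * d) = s := by
    have h : s * (e * d) = p * (e * d) + q * (e * d) := by
      rw [hs_def]; noncomm_ring
    rw [hpH, hqH] at h
    rw [h, hs_def]
  have hHs : (e * d) * s = s := by
    have h : (e * d) * s = (e * d) * p + (e * d) * q := by
      rw [hs_def]; noncomm_ring
    rw [hHp, hHq] at h
    rw [h, hs_def]
  -- e*(s*d) = 2*(e*d) - s
  have hesd : e * (s * d) = 2 * (e * d) - s := by
    have h : e * (s * d) + s * (e * d) = 2 * (e * d) := by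
      calc e * (s * d) + s * (e * d) = (e * s + s * e) * d := by noncomm_ring
        _ = (2 * e) * d := by rw [hese]
        _ = 2 * (e * d) := by noncomm_ring
    rw [hsH] at h
    exact eq_sub_of_add_eq h
  -- s*d = 2*d - d*s
  have hsd : s * d = 2 * d - d * s := by
    calc s * d = ((e * d) * s) * d := by rw [hHs]
      _ = ((d * e) * s) * d := by rw [hde]
      _ = d * (e * (s * d)) := by noncomm_ring
      _ = d * (2 * (e * d) - s) := by rw [hesd]
      _ = 2 * (d * (e * d)) - d * s := by noncomm_ring
      _ = 2 * d - d * s := by rw [show d * (e * d) = d by rw [← mul_assoc, hd2]]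
  -- the key identity s*d*s = e
  have hsds : s * d * s = e := by
    calc s * d * s = (2 * d - d * s) * s := by rw [hsd]
      _ = 2 * (d * s) - d * (s * s) := by noncomm_ring
      _ = 2 * (d * s) - d * (2 * s - e * e) := by rw [hss]
      _ = d * (e * e) := by noncomm_ring
      _ = (d * e) * e := by rw [mul_assoc]
      _ = (e * d) * e := by rw [hde]
      _ = e := hd1
  refine ⟨?_, ?_, ?_, ?_⟩
  · calc s * (d * s * d) * s = ((s * d * s) * d) * s := by noncomm_ring
      _ = (e * d) * s := by rw [hsds]
      _ = s := hHs
  · calc (d * s * d) * s * (d * s * d) = (d * (s * d * s)) * (d * s * d) := by noncomm_ring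
      _ = (d * e) * (d * s * d) := by rw [hsds]
      _ = ((d * e * d) * s) * d := by noncomm_ring
      _ = (d * s) * d := by rw [hd2]
  · have h : s * (d * s * d) = e * d := by
      calc s * (d * s * d) = (s * d * s) * d := by noncomm_ring
        _ = e * d := by rw [hsds]
    rw [h]; exact hd3
  · have h : (d * s * d) * s = d * e := by
      calc (d * s * d) * s = d * (s * d * s) := by noncomm_ring
        _ = d * e := by rw [hsds]
    rw [h]; exact hd4
end

section
/- Let R be a *-ring and p, q projectors such that pq - qp is *-cancellable. Then: (1) p - q is Moore-Penrose invertible with (p-q)† = p - q if and only if pq = qp; (2) if 6 is invertible in R, then p + q is Moore-Penrose invertible with (p+q)† = p + q if and only if pq = 0. -/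
theorem stmt19 {R : Type*} [Ring R] [StarRing R] (p q : R)
    (hp : IsProjector p) (hq : IsProjector q)
    (hc : StarCancellable (p * q - q * p)) :
    (IsMP (p - q) (p - q) ↔ p * q = q * p) ∧
    (IsUnit (6 : R) → (IsMP (p + q) (p + q) ↔ p * q = 0)) := by
  obtain ⟨hp1, hp2⟩ := hp
  obtain ⟨hq1, hq2⟩ := hq
  have hpR : ∀ x : R, x * p * p = x * p := fun x => by rw [mul_assoc, hp1]
  have hqR : ∀ x : R, x * q * q = x * q := fun x => by rw [mul_assoc, hq1]
  have hstarpq : star (p * q) = q * p := by rw [star_mul, hp2, hq2]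
  have hstarqp : star (q * p) = p * q := by rw [star_mul, hp2, hq2]
  have cast6 : ((6 : ℕ) : R) = (6 : R) := by norm_num
  constructor
  · constructor
    · intro h
      have e := h.1
      have e2 : (p - q) * (p - q) * (p - q) = p - q - p*q*p + q*p*q := by
        simp only [sub_mul, mul_sub, ← mul_assoc, hp1, hq1, hpR, hqR]
        abel
      rw [e2] at e
      have key : p*q*p = q*p*q := by
        have h' : (p - q - p*q*p + q*p*q) - (p - q) = 0 := by rw [e, sub_self]
        have h'' : q*p*q - p*q*p = 0 := by rw [← h']; abel
        exact (sub_eq_zero.mp h'').symm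
      have k1 : p*q*p*q = q*p*q := by rw [key, hqR]
      have k2 : q*p*q*p = p*q*p := by rw [← key, hpR]
      have hcc : star (p*q - q*p) * (p*q - q*p) * 1 = 0 := by
        rw [mul_one, star_sub, hstarpq, hstarqp]
        simp only [sub_mul, mul_sub, ← mul_assoc, hp1, hq1, hpR, hqR]
        rw [k1, k2, key]
        abel
      have := hc.1 1 hcc
      rw [mul_one, sub_eq_zero] at this
      exact this
    · intro hcm
      have hpqp : p*q*p = q*p := by rw [hcm, hpR]
      have hqpq : q*p*q = q*p := by rw [← hcm, hqR]
      have cube : (p - q) * (p - q) * (p - q) = p - q := by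
        simp only [sub_mul, mul_sub, ← mul_assoc, hp1, hq1, hpR, hqR, hpqp, hqpq]
        abel
      have sq : star ((p - q) * (p - q)) = (p - q) * (p - q) := by
        have hsq : (p - q) * (p - q) = p + q - p*q - q*p := by
          simp only [sub_mul, mul_sub, hp1, hq1]; abel
        rw [hsq, star_sub, star_sub, star_add, hstarpq, hstarqp, hp2, hq2]
        abel
      exact ⟨cube, cube, sq, sq⟩
  · intro h6
    constructor
    · intro h
      have e := h.1
      have e2 : (p + q) * (p + q) * (p + q)
          = p + q + 2•(p*q) + 2•(q*p) + p*q*p + q*p*q := by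
        simp only [add_mul, mul_add, ← mul_assoc, hp1, hq1, hpR, hqR]
        abel
      rw [e2] at e
      have s1 : 2•(p*q) + 2•(q*p) + p*q*p + q*p*q = 0 := by
        have h' : (p + q + 2•(p*q) + 2•(q*p) + p*q*p + q*p*q) - (p + q) = 0 := by
          rw [e, sub_self]
        rw [← h']; abel
      have A : 2•(p*q) + 3•(p*q*p) + p*q*p*q = 0 := by
        have hA := congrArg (fun x => p * x) s1
        simp only [mul_add, mul_smul_comm, ← mul_assoc, hp1, mul_zero] at hA
        abel_nf at hA ⊢
        exact hA
      have D : 2•(p*q) + 4•(p*q*p*q) = 0 := by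
        have hD := congrArg (fun x => x * q) A
        simp only [add_mul, smul_mul_assoc, hqR, zero_mul] at hD
        abel_nf at hD ⊢
        exact hD
      have E0 : 6•(p*q) + 12•(p*q*p) = (0:R) := by
        calc 6•(p*q) + 12•(p*q*p)
            = 4•(2•(p*q) + 3•(p*q*p) + p*q*p*q) - (2•(p*q) + 4•(p*q*p*q)) := by abel
          _ = 4•(0:R) - 0 := by rw [A, D]
          _ = 0 := by simp
      have E1 : (6:R) * (p*q + 2•(p*q*p)) = 0 := by
        rw [← cast6, ← nsmul_eq_mul, ← E0]
        abel
      have F : p*q + 2•(p*q*p) = 0 := h6.mul_left_cancel (by rw [E1, mul_zero])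
      have pqEq : p*q = -(2•(p*q*p)) := eq_neg_of_add_eq_zero_left F
      have hstarpqp : star (p*q*p) = p*q*p := by
        rw [star_mul, hstarpq, hp2, mul_assoc]
      have hqpEq : q*p = -(2•(p*q*p)) := by
        have hs := congrArg star pqEq
        rwa [hstarpq, star_neg, star_nsmul, hstarpqp] at hs
      have hcm : p*q = q*p := pqEq.trans hqpEq.symm
      have hpqp2 : p*q*p = p*q := by rw [hcm, hpR]
      rw [hpqp2] at F
      have h6pq : (6:R) * (p*q) = 0 := by
        rw [← cast6, ← nsmul_eq_mul]
        calc (6:ℕ)•(p*q) = 2•(p*q + 2•(p*q)) := by abel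
          _ = 0 := by rw [F, smul_zero]
      exact h6.mul_left_cancel (by rw [h6pq, mul_zero])
    · intro h0
      have hqp0 : q*p = 0 := by rw [← hstarpq, h0, star_zero]
      have sq : (p + q) * (p + q) = p + q := by
        simp only [add_mul, mul_add, hp1, hq1, h0, hqp0, add_zero, zero_add]
      have cube : (p + q) * (p + q) * (p + q) = p + q := by rw [sq, sq]
      have st : star ((p + q) * (p + q)) = (p + q) * (p + q) := by
        rw [sq, star_add, hp2, hq2]
      exact ⟨cube, cube, st, st⟩
end
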